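/- The decision boundary is contained in the tropical hypersurface of R: if x ∈ ℝⁿ satisfies f₁(x) = f₂(x), then H₁(x) + Q₂(x) = H₂(x) + Q₁(x) = R(x), i.e., the maximum defining R(x) := max(H₁(x)+Q₂(x), H₂(x)+Q₁(x)) is attained by both of its two terms at x. -/
import Mathlib


open Matrix Finset

/-- Entrywise positive part of a matrix. -/
noncomputable def matPos {p n : ℕ} (M : Matrix (Fin p) (Fin n) ℝ) : Matrix (Fin p) (Fin n) ℝ :=
  fun i j => max (M i j) 0

/-- Entrywise negative part of a matrix. -/
noncomputable def matNeg {p n : ℕ} (M : Matrix (Fin p) (Fin n) ℝ) : Matrix (Fin p) (Fin n) ℝ :=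
  fun i j => max (-(M i j)) 0

/-- Output `i` of the bias-free network `f(x) = B max(Ax, 0)`. -/
noncomputable def netOut {p n k : ℕ} (A : Matrix (Fin p) (Fin n) ℝ)
    (B : Matrix (Fin k) (Fin p) ℝ) (i : Fin k) (x : Fin n → ℝ) : ℝ :=
  ∑ j, B i j * max (A j ⬝ᵥ x) 0

/-- The tropical polynomial `H_i`. -/
noncomputable def Hpoly {p n k : ℕ} (A : Matrix (Fin p) (Fin n) ℝ)
    (B : Matrix (Fin k) (Fin p) ℝ) (i : Fin k) (x : Fin n → ℝ) : ℝ :=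
  ∑ j, (matPos B i j * max (matPos A j ⬝ᵥ x) (matNeg A j ⬝ᵥ x)
        + matNeg B i j * (matNeg A j ⬝ᵥ x))

/-- The tropical polynomial `Q_i`. -/
noncomputable def Qpoly {p n k : ℕ} (A : Matrix (Fin p) (Fin n) ℝ)
    (B : Matrix (Fin k) (Fin p) ℝ) (i : Fin k) (x : Fin n → ℝ) : ℝ :=
  ∑ j, (matNeg B i j * max (matPos A j ⬝ᵥ x) (matNeg A j ⬝ᵥ x)
        + matPos B i j * (matNeg A j ⬝ᵥ x))


lemma dot_pos_sub_neg {p n : ℕ} (A : Matrix (Fin p) (Fin n) ℝ) (j : Fin p) (x : Fin n → ℝ) :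
    matPos A j ⬝ᵥ x - matNeg A j ⬝ᵥ x = A j ⬝ᵥ x := by
  simp only [dotProduct, ← Finset.sum_sub_distrib, matPos, matNeg]
  congr 1; ext i
  rw [← sub_mul]
  congr 1
  rcases le_or_gt 0 (A j i) with h | h
  · rw [max_eq_left h, max_eq_right (by linarith), sub_zero]
  · rw [max_eq_right h.le, max_eq_left (by linarith)]; ring

lemma H_sub_Q {p n k : ℕ} (A : Matrix (Fin p) (Fin n) ℝ)
    (B : Matrix (Fin k) (Fin p) ℝ) (i : Fin k) (x : Fin n → ℝ) :
    Hpoly A B i x - Qpoly A B i x = netOut A B i x := by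
  simp only [Hpoly, Qpoly, netOut, ← Finset.sum_sub_distrib]
  congr 1; ext j
  have hB : matPos B i j - matNeg B i j = B i j := by
    simp only [matPos, matNeg]
    rcases le_or_gt 0 (B i j) with h | h
    · rw [max_eq_left h, max_eq_right (by linarith), sub_zero]
    · rw [max_eq_right h.le, max_eq_left (by linarith)]; ring
  have hA : max (matPos A j ⬝ᵥ x) (matNeg A j ⬝ᵥ x) - matNeg A j ⬝ᵥ x = max (A j ⬝ᵥ x) 0 := by
    rw [← dot_pos_sub_neg A j x]
    rcases le_total (matNeg A j ⬝ᵥ x) (matPos A j ⬝ᵥ x) with h | h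
    · rw [max_eq_left h, max_eq_left (by linarith)]
    · rw [max_eq_right h, max_eq_right (by linarith), sub_self]
  calc matPos B i j * max (matPos A j ⬝ᵥ x) (matNeg A j ⬝ᵥ x) + matNeg B i j * (matNeg A j ⬝ᵥ x)
        - (matNeg B i j * max (matPos A j ⬝ᵥ x) (matNeg A j ⬝ᵥ x) + matPos B i j * (matNeg A j ⬝ᵥ x))
      = (matPos B i j - matNeg B i j) * (max (matPos A j ⬝ᵥ x) (matNeg A j ⬝ᵥ x) - matNeg A j ⬝ᵥ x) := by ring
    _ = B i j * max (A j ⬝ᵥ x) 0 := by rw [hB, hA]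

/-- If `x` is on the decision boundary, i.e. `f₁(x) = f₂(x)`, then the two monomials of
`R = (H₁ ⊙ Q₂) ⊕ (H₂ ⊙ Q₁)` agree at `x` and both attain the maximum defining `R(x)`;
hence the decision boundary is contained in the tropical hypersurface `T(R)`. -/
theorem decision_boundary_subset_tropical_hypersurface {p n : ℕ}
    (A : Matrix (Fin p) (Fin n) ℝ) (B : Matrix (Fin 2) (Fin p) ℝ) (x : Fin n → ℝ)
    (hx : netOut A B 0 x = netOut A B 1 x) :
    Hpoly A B 0 x + Qpoly A B 1 x = Hpoly A B 1 x + Qpoly A B 0 x ∧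
    Hpoly A B 0 x + Qpoly A B 1 x
      = max (Hpoly A B 0 x + Qpoly A B 1 x) (Hpoly A B 1 x + Qpoly A B 0 x) ∧
    Hpoly A B 1 x + Qpoly A B 0 x
      = max (Hpoly A B 0 x + Qpoly A B 1 x) (Hpoly A B 1 x + Qpoly A B 0 x) := by
  have h1 := H_sub_Q A B 0 x
  have h2 := H_sub_Q A B 1 x
  have key : Hpoly A B 0 x + Qpoly A B 1 x = Hpoly A B 1 x + Qpoly A B 0 x := by linarith
  exact ⟨key, by rw [key, max_self], by rw [key, max_self]⟩
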